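/- The number of a×b 0–1 matrices in which every two rows have numbers of nonzeros differing by at most one equals ∑_{i=0}^{b-1} (C(b,i) + C(b,i+1))^a − ∑_{i=1}^{b-1} C(b,i)^a. -/

import Mathlib

/-- Number of nonzero (true) entries in row `i` of a 0-1 matrix. -/
def rowCount {a b : ℕ} (M : Fin a → Fin b → Bool) (i : Fin a) : ℕ :=
  (Finset.univ.filter (fun j => M i j = true)).card

/-- A 0-1 matrix is almost balanced if every two rows have numbers of
nonzeros differing by at most one. -/
def AlmostBalanced {a b : ℕ} (M : Fin a → Fin b → Bool) : Prop :=
  ∀ i i' : Fin a, rowCount M i ≤ rowCount M i' + 1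

open Finset

instance {a b : ℕ} : DecidablePred (@AlmostBalanced a b) := fun M => by
  unfold AlmostBalanced; infer_instance

/-- weight of a row -/
def wt {b : ℕ} (r : Fin b → Bool) : ℕ := (Finset.univ.filter (fun j => r j = true)).card

lemma wt_le {b : ℕ} (r : Fin b → Bool) : wt r ≤ b := by
  have := Finset.card_filter_le (Finset.univ : Finset (Fin b)) (fun j => r j = true)
  simpa [wt] using this

lemma card_wt_eq (b k : ℕ) :
    ((Finset.univ : Finset (Fin b → Bool)).filter (fun r => wt r = k)).card = b.choose k := by
  have h : ((Finset.univ : Finset (Fin b → Bool)).filter (fun r => wt r = k)).card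
      = (Finset.powersetCard k (Finset.univ : Finset (Fin b))).card := by
    refine Finset.card_bij' (fun r _ => Finset.univ.filter (fun j => r j = true))
      (fun s _ => fun j => decide (j ∈ s)) ?_ ?_ ?_ ?_
    · intro r hr
      simp only [Finset.mem_filter, Finset.mem_univ, true_and] at hr
      simp [Finset.mem_powersetCard_univ, ← hr, wt]
    · intro s hs
      simp only [Finset.mem_powersetCard_univ] at hs
      simp [Finset.mem_filter, wt, ← hs]
    · intro r hr
      funext j
      simp
    · intro s hs
      ext j
      simp
  rw [h, Finset.card_powersetCard, Finset.card_univ, Fintype.card_fin]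

lemma card_pi_rows (a b : ℕ) (T : Finset (Fin b → Bool)) :
    ((Finset.univ : Finset (Fin a → Fin b → Bool)).filter (fun M => ∀ i, M i ∈ T)).card
      = T.card ^ a := by
  have h : ((Finset.univ : Finset (Fin a → Fin b → Bool)).filter (fun M => ∀ i, M i ∈ T))
      = Fintype.piFinset (fun _ : Fin a => T) := by
    ext M
    simp [Fintype.mem_piFinset]
  rw [h, Fintype.card_piFinset]
  simp

theorem almostBalanced_count (a b : ℕ) (ha : 0 < a) (hb : 0 < b) :
    (Nat.card {M : Fin a → Fin b → Bool // AlmostBalanced M} : ℤ) =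
      ∑ i ∈ Finset.range b, ((b.choose i : ℤ) + (b.choose (i+1) : ℤ)) ^ a -
        ∑ i ∈ Finset.Ico 1 b, (b.choose i : ℤ) ^ a := by
  classical
  -- the finset of almost balanced matrices
  set F : Finset (Fin a → Fin b → Bool) := Finset.univ.filter AlmostBalanced with hF
  have hNat : Nat.card {M : Fin a → Fin b → Bool // AlmostBalanced M} = F.card := by
    rw [Nat.card_eq_fintype_card, Fintype.card_subtype]
  have huniv : (Finset.univ : Finset (Fin a)).Nonempty := by
    simpa [Finset.univ_nonempty_iff] using Fin.pos_iff_nonempty.mp ha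
  have hrow_wt : ∀ (M : Fin a → Fin b → Bool) (i : Fin a), rowCount M i = wt (M i) :=
    fun M i => rfl
  -- fiberwise decomposition by max row count
  have hfib : F.card = ∑ k ∈ Finset.range (b+1),
      (F.filter (fun M => Finset.univ.sup (fun i => rowCount M i) = k)).card := by
    apply Finset.card_eq_sum_card_fiberwise
    intro M _
    simp only [Finset.mem_coe, Finset.mem_range, Nat.lt_succ_iff]
    apply Finset.sup_le
    intro i _
    rw [hrow_wt]; exact wt_le _
  -- the fiber at 0
  have h0 : (F.filter (fun M => Finset.univ.sup (fun i => rowCount M i) = 0)).card = 1 := by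
    have heq : F.filter (fun M => Finset.univ.sup (fun i => rowCount M i) = 0)
        = Finset.univ.filter (fun M : Fin a → Fin b → Bool =>
            ∀ i, M i ∈ (Finset.univ : Finset (Fin b → Bool)).filter (fun r => wt r = 0)) := by
      ext M
      simp only [hF, Finset.filter_filter, Finset.mem_filter, Finset.mem_univ, true_and]
      constructor
      · rintro ⟨-, hsup⟩ i
        have hle := Finset.le_sup (f := fun i => rowCount M i) (Finset.mem_univ i)
        rw [hsup] at hle
        simpa [← hrow_wt M i] using Nat.le_zero.mp hle
      · intro h
        have hz : ∀ i, rowCount M i = 0 := by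
          intro i
          have := h i
          try simp only [Finset.mem_filter, Finset.mem_univ, true_and] at this
          rw [hrow_wt]; exact this
        refine ⟨fun i i' => by simp [hz], ?_⟩
        exact Nat.le_antisymm (Finset.sup_le fun i _ => by simp [hz]) (Nat.zero_le _)
    rw [heq, card_pi_rows, card_wt_eq]
    simp
  -- the fiber at k+1
  have hk : ∀ k, (F.filter (fun M => Finset.univ.sup (fun i => rowCount M i) = k + 1)).card
      = (b.choose k + b.choose (k+1)) ^ a - (b.choose k) ^ a := by
    intro k
    set T : Finset (Fin b → Bool) :=
      (Finset.univ : Finset (Fin b → Bool)).filter (fun r => wt r = k ∨ wt r = k + 1) with hT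
    set G : Finset (Fin a → Fin b → Bool) :=
      Finset.univ.filter (fun M => ∀ i, M i ∈ T) with hG
    set H : Finset (Fin a → Fin b → Bool) :=
      Finset.univ.filter (fun M : Fin a → Fin b → Bool => ∀ i, wt (M i) = k) with hH
    have hmem : ∀ r : Fin b → Bool, r ∈ T ↔ wt r = k ∨ wt r = k + 1 := by
      intro r; simp [hT]
    have hHG : H ⊆ G := by
      intro M hM
      simp only [hH, Finset.mem_filter, Finset.mem_univ, true_and] at hM
      simp only [hG, Finset.mem_filter, Finset.mem_univ, true_and]
      intro i
      rw [hmem]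
      exact Or.inl (hM i)
    have key : F.filter (fun M => Finset.univ.sup (fun i => rowCount M i) = k + 1)
        = G \ H := by
      ext M
      simp only [hF, hG, hH, Finset.mem_filter, Finset.mem_univ, true_and,
        Finset.mem_sdiff]
      constructor
      · rintro ⟨hbal, hsup⟩
        obtain ⟨i₀, -, hi₀⟩ := Finset.exists_mem_eq_sup Finset.univ huniv
          (fun i => rowCount M i)
        rw [hsup] at hi₀
        have hle : ∀ i, rowCount M i ≤ k + 1 := by
          intro i
          rw [← hsup]
          exact Finset.le_sup (Finset.mem_univ i)
        have hge : ∀ i, k ≤ rowCount M i := by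
          intro i
          have := hbal i₀ i
          omega
        constructor
        · intro i
          rw [hmem, ← hrow_wt]
          have h1 := hle i; have h2 := hge i; omega
        · intro hall
          have := hall i₀
          rw [← hrow_wt] at this
          omega
      · rintro ⟨hG', hH'⟩
        have hrange : ∀ i, rowCount M i = k ∨ rowCount M i = k + 1 := by
          intro i
          have := hG' i
          rw [hmem, ← hrow_wt] at this
          exact this
        have hbal : AlmostBalanced M := by
          intro i i'
          rcases hrange i with h1 | h1 <;> rcases hrange i' with h2 | h2 <;> omega
        refine ⟨hbal, ?_⟩
        have hex : ∃ i, rowCount M i = k + 1 := by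
          by_contra hcon
          push_neg at hcon
          apply hH'
          intro i
          rw [← hrow_wt]
          rcases hrange i with h | h
          · exact h
          · exact absurd h (hcon i)
        obtain ⟨i₁, hi₁⟩ := hex
        apply Nat.le_antisymm
        · apply Finset.sup_le
          intro i _
          rcases hrange i with h | h <;> omega
        · rw [← hi₁]
          exact Finset.le_sup (Finset.mem_univ i₁)
    have hGcard : G.card = (b.choose k + b.choose (k+1)) ^ a := by
      rw [hG, card_pi_rows]
      congr 1
      have hdisj : Disjoint
          ((Finset.univ : Finset (Fin b → Bool)).filter (fun r => wt r = k))
          ((Finset.univ : Finset (Fin b → Bool)).filter (fun r => wt r = k + 1)) := by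
        rw [Finset.disjoint_filter]
        intro r _ h1 h2
        omega
      rw [hT, Finset.filter_or, Finset.card_union_of_disjoint hdisj,
        card_wt_eq, card_wt_eq]
    have hHcard : H.card = (b.choose k) ^ a := by
      have : H = Finset.univ.filter (fun M : Fin a → Fin b → Bool =>
          ∀ i, M i ∈ (Finset.univ : Finset (Fin b → Bool)).filter (fun r => wt r = k)) := by
        ext M
        simp [hH]
      rw [this, card_pi_rows, card_wt_eq]
    rw [key, Finset.card_sdiff_of_subset hHG, hGcard, hHcard]
  -- put it together
  have hcast : ∀ k : ℕ, (((b.choose k + b.choose (k+1)) ^ a - (b.choose k) ^ a : ℕ) : ℤ)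
      = ((b.choose k : ℤ) + (b.choose (k+1) : ℤ)) ^ a - (b.choose k : ℤ) ^ a := by
    intro k
    have hle : (b.choose k) ^ a ≤ (b.choose k + b.choose (k+1)) ^ a :=
      Nat.pow_le_pow_left (Nat.le_add_right _ _) a
    push_cast [Nat.cast_sub hle]
    ring
  rw [hNat, hfib, Finset.sum_range_succ']
  push_cast [hk, h0, hcast]
  have hIco : ∑ i ∈ Finset.Ico 1 b, ((b.choose i : ℤ)) ^ a
      = (∑ i ∈ Finset.range b, ((b.choose i : ℤ)) ^ a) - 1 := by
    rw [Finset.range_eq_Ico, Finset.sum_eq_sum_Ico_succ_bot hb]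
    simp
  rw [hIco, Finset.sum_sub_distrib]
  ring
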